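/- Let k ≥ 2 and let g > 0 be such that s := k²/g is an integer with s ≥ k. Let G be a graph and S a vertex subset with |S| = s spanning at least (k−1)² edges. Then there exists a k-element subset T ⊆ S spanning at least (k(k−1)³·g²)/(k⁴) ≥ g²/2 edges of G, where the last inequality holds for all sufficiently large k (depending on g being at most k). -/

import Mathlib

open Finset

/-- Counting: for distinct `a b ∈ S`, at least `(|S|-2).choose (k-2)` of the
`k`-subsets of `S` contain both `a` and `b`. -/
lemma count_pairs_aux {V : Type*} [DecidableEq V] (S : Finset V) (k : ℕ)
    (a b : V) (hab : a ≠ b) (haS : a ∈ S) (hbS : b ∈ S) (hk : 2 ≤ k) :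
    (S.card - 2).choose (k - 2) ≤
      ((S.powersetCard k).filter (fun T => a ∈ T ∧ b ∈ T)).card := by
  classical
  have habS : ({a, b} : Finset V) ⊆ S := by
    intro x hx
    simp only [mem_insert, mem_singleton] at hx
    rcases hx with rfl | rfl <;> assumption
  have hcard_ab : ({a, b} : Finset V).card = 2 := card_pair hab
  have hdom : ((S \ {a, b}).powersetCard (k - 2)).card = (S.card - 2).choose (k - 2) := by
    rw [card_powersetCard, card_sdiff_of_subset habS, hcard_ab]
  rw [← hdom]
  apply card_le_card_of_injOn (fun T => insert a (insert b T))
  · intro T hT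
    rw [mem_coe, mem_powersetCard] at hT
    obtain ⟨hTsub, hTcard⟩ := hT
    have haT : a ∉ T := fun h => (mem_sdiff.mp (hTsub h)).2 (by simp)
    have hbT : b ∉ T := fun h => (mem_sdiff.mp (hTsub h)).2 (by simp)
    have haT' : a ∉ insert b T := by
      simp only [mem_insert]
      push_neg
      exact ⟨hab, haT⟩
    rw [mem_coe, mem_filter, mem_powersetCard]
    refine ⟨⟨?_, ?_⟩, by simp, by simp⟩
    · intro x hx
      simp only [mem_insert] at hx
      rcases hx with rfl | rfl | hx
      · exact haS
      · exact hbS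
      · exact (mem_sdiff.mp (hTsub hx)).1
    · rw [card_insert_of_notMem haT', card_insert_of_notMem hbT, hTcard]
      omega
  · intro T₁ hT₁ T₂ hT₂ h
    rw [mem_coe, mem_powersetCard] at hT₁ hT₂
    have key : ∀ T : Finset V, T ⊆ S \ {a, b} → insert a (insert b T) \ {a, b} = T := by
      intro T hTsub
      ext x
      simp only [mem_sdiff, mem_insert, mem_singleton]
      push_neg
      constructor
      · rintro ⟨rfl | rfl | hx, hne⟩
        · exact absurd rfl hne.1
        · exact absurd rfl hne.2
        · exact hx
      · intro hx
        have h2 := mem_sdiff.mp (hTsub hx)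
        simp only [mem_insert, mem_singleton] at h2
        push_neg at h2
        exact ⟨Or.inr (Or.inr hx), h2.2.1, h2.2.2⟩
    calc T₁ = insert a (insert b T₁) \ {a, b} := (key T₁ hT₁.1).symm
      _ = insert a (insert b T₂) \ {a, b} := congrArg (· \ ({a, b} : Finset V)) h
      _ = T₂ := key T₂ hT₂.1

theorem dense_subset_exists
    {V : Type*} [Fintype V] [DecidableEq V] (G : SimpleGraph V) [DecidableRel G.Adj]
    (k : ℕ) (hk : 2 ≤ k) (g : ℝ) (hg : 0 < g)
    (s : ℕ) (hs : (s : ℝ) = (k : ℝ) ^ 2 / g) (hsk : k ≤ s)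
    (S : Finset V) (hS : S.card = s)
    (hE : ((k : ℝ) - 1) ^ 2 ≤ ((G.edgeFinset.filter (· ∈ S.sym2)).card : ℝ)) :
    (∃ T ⊆ S, T.card = k ∧
        (k : ℝ) * ((k : ℝ) - 1) ^ 3 * g ^ 2 / (k : ℝ) ^ 4
          ≤ ((G.edgeFinset.filter (· ∈ T.sym2)).card : ℝ))
      ∧ (5 ≤ k → g ^ 2 / 2 ≤ (k : ℝ) * ((k : ℝ) - 1) ^ 3 * g ^ 2 / (k : ℝ) ^ 4) := by
  classical
  have hkR : (2 : ℝ) ≤ (k : ℝ) := by exact_mod_cast hk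
  have hk0 : (0 : ℝ) < (k : ℝ) := by linarith
  constructor
  · -- main part
    set E := G.edgeFinset.filter (· ∈ S.sym2) with hEdef
    have hs2 : 2 ≤ s := hk.trans hsk
    -- counting bound for each edge
    have hcount : ∀ e ∈ E, (s - 2).choose (k - 2) ≤
        ((S.powersetCard k).filter (fun T => e ∈ T.sym2)).card := by
      intro e he
      rw [hEdef, mem_filter] at he
      obtain ⟨he1, he2⟩ := he
      induction e using Sym2.ind with
      | _ a b =>
        have hadj : G.Adj a b := by rwa [SimpleGraph.mem_edgeFinset, SimpleGraph.mem_edgeSet] at he1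
        have hab : a ≠ b := hadj.ne
        rw [Finset.mk_mem_sym2_iff] at he2
        have := count_pairs_aux S k a b hab he2.1 he2.2 hk
        rw [hS] at this
        refine this.trans (le_of_eq ?_)
        congr 1
        ext T
        simp [Finset.mk_mem_sym2_iff]
    -- total sum bound
    have hsum : E.card * (s - 2).choose (k - 2) ≤
        ∑ T ∈ S.powersetCard k, (E.filter (· ∈ T.sym2)).card := by
      calc E.card * (s - 2).choose (k - 2)
          = ∑ _e ∈ E, (s - 2).choose (k - 2) := by rw [sum_const, smul_eq_mul]
        _ ≤ ∑ e ∈ E, ((S.powersetCard k).filter (fun T => e ∈ T.sym2)).card :=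
            sum_le_sum hcount
        _ = ∑ e ∈ E, ∑ T ∈ S.powersetCard k, if e ∈ T.sym2 then 1 else 0 := by
            refine sum_congr rfl fun e _ => ?_
            rw [Finset.card_filter]
        _ = ∑ T ∈ S.powersetCard k, ∑ e ∈ E, if e ∈ T.sym2 then 1 else 0 := sum_comm
        _ = ∑ T ∈ S.powersetCard k, (E.filter (· ∈ T.sym2)).card := by
            refine sum_congr rfl fun T _ => ?_
            rw [Finset.card_filter]
    -- average argument
    have hPne : (S.powersetCard k).Nonempty :=
      powersetCard_nonempty.mpr (by rw [hS]; exact hsk)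
    have hNpos : 0 < ((S.powersetCard k).card : ℝ) := by
      exact_mod_cast card_pos.mpr hPne
    set N : ℝ := ((S.powersetCard k).card : ℝ) with hN
    set c : ℝ := ((E.card : ℝ) * ((s - 2).choose (k - 2) : ℝ)) / N with hc
    have havg : ∑ T ∈ S.powersetCard k, c ≤
        ∑ T ∈ S.powersetCard k, ((E.filter (· ∈ T.sym2)).card : ℝ) := by
      rw [sum_const, nsmul_eq_mul, hc, mul_div_assoc']
      rw [mul_comm, mul_div_assoc, div_self (ne_of_gt hNpos), mul_one]
      calc (E.card : ℝ) * ((s - 2).choose (k - 2) : ℝ)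
          = ((E.card * (s - 2).choose (k - 2) : ℕ) : ℝ) := by push_cast; ring
        _ ≤ ((∑ T ∈ S.powersetCard k, (E.filter (· ∈ T.sym2)).card : ℕ) : ℝ) := by
            exact_mod_cast hsum
        _ = ∑ T ∈ S.powersetCard k, ((E.filter (· ∈ T.sym2)).card : ℝ) := by push_cast; rfl
    obtain ⟨T, hTP, hT⟩ := Finset.exists_le_of_sum_le hPne havg
    rw [mem_powersetCard] at hTP
    refine ⟨T, hTP.1, hTP.2, ?_⟩
    -- it remains: target ≤ c ≤ count T ≤ (edge filter T).card
    have hmono : ((E.filter (· ∈ T.sym2)).card : ℝ) ≤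
        ((G.edgeFinset.filter (· ∈ T.sym2)).card : ℝ) := by
      have : E.filter (· ∈ T.sym2) ⊆ G.edgeFinset.filter (· ∈ T.sym2) :=
        filter_subset_filter _ (filter_subset _ _)
      exact_mod_cast card_le_card this
    refine le_trans ?_ (hT.trans hmono)
    -- target ≤ c
    have hchoose : (s.choose k) * (k.choose 2) = (s.choose 2) * ((s - 2).choose (k - 2)) :=
      Nat.choose_mul hk
    have hNval : N = (s.choose k : ℝ) := by rw [hN, card_powersetCard, hS]
    have hskpos : (0 : ℝ) < (s.choose k : ℝ) := by
      exact_mod_cast Nat.choose_pos hsk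
    have hs2pos : (0 : ℝ) < (s.choose 2 : ℝ) := by
      exact_mod_cast Nat.choose_pos hs2
    have hcval : c = (E.card : ℝ) * (k.choose 2 : ℝ) / (s.choose 2 : ℝ) := by
      rw [hc, hNval]
      rw [div_eq_div_iff hskpos.ne' hs2pos.ne']
      have hcc : ((s.choose k) * (k.choose 2) : ℝ) = ((s.choose 2) * ((s - 2).choose (k - 2)) : ℝ) := by
        exact_mod_cast congrArg (Nat.cast (R := ℝ)) hchoose
      linear_combination (-(E.card : ℝ)) * hcc
    rw [hcval, Nat.cast_choose_two, Nat.cast_choose_two]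
    -- now pure real arithmetic
    have hgs : g * (s : ℝ) = (k : ℝ) ^ 2 := by
      rw [hs]; field_simp
    have hsR : (1 : ℝ) ≤ (s : ℝ) := by
      have : (2 : ℝ) ≤ (s : ℝ) := by exact_mod_cast hs2
      linarith
    have h1 : g ^ 2 * ((s : ℝ) * ((s : ℝ) - 1)) ≤ (k : ℝ) ^ 4 := by
      nlinarith [hgs, hg.le, hsR, sq_nonneg g]
    have hsR2 : (2 : ℝ) ≤ (s : ℝ) := by exact_mod_cast hs2
    have hden : (0 : ℝ) < (s : ℝ) * ((s : ℝ) - 1) / 2 := by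
      have : (0 : ℝ) < (s : ℝ) * ((s : ℝ) - 1) :=
        mul_pos (by linarith) (by linarith)
      linarith
    rw [div_le_div_iff₀ (by positivity) hden]
    have hkm : (0 : ℝ) ≤ (k : ℝ) - 1 := by linarith
    have hA : (0 : ℝ) ≤ (k : ℝ) * ((k : ℝ) - 1) ^ 3 / 2 :=
      div_nonneg (mul_nonneg hk0.le (pow_nonneg hkm 3)) (by norm_num)
    have hB : (0 : ℝ) ≤ (k : ℝ) * ((k : ℝ) - 1) / 2 * (k : ℝ) ^ 4 :=
      mul_nonneg (div_nonneg (mul_nonneg hk0.le hkm) (by norm_num)) (by positivity)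
    calc (k : ℝ) * ((k : ℝ) - 1) ^ 3 * g ^ 2 * ((s : ℝ) * ((s : ℝ) - 1) / 2)
        = ((k : ℝ) * ((k : ℝ) - 1) ^ 3 / 2) * (g ^ 2 * ((s : ℝ) * ((s : ℝ) - 1))) := by ring
      _ ≤ ((k : ℝ) * ((k : ℝ) - 1) ^ 3 / 2) * (k : ℝ) ^ 4 :=
          mul_le_mul_of_nonneg_left h1 hA
      _ = ((k : ℝ) - 1) ^ 2 * ((k : ℝ) * ((k : ℝ) - 1) / 2 * (k : ℝ) ^ 4) := by ring
      _ ≤ ((E.card : ℝ)) * ((k : ℝ) * ((k : ℝ) - 1) / 2 * (k : ℝ) ^ 4) :=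
          mul_le_mul_of_nonneg_right hE hB
      _ = (E.card : ℝ) * ((k : ℝ) * ((k : ℝ) - 1) / 2) * (k : ℝ) ^ 4 := by ring
  · -- easy part
    intro hk5
    have hk5R : (5 : ℝ) ≤ (k : ℝ) := by exact_mod_cast hk5
    rw [div_le_div_iff₀ (by norm_num) (by positivity)]
    have h5 : (0 : ℝ) ≤ (k : ℝ) - 5 := by linarith
    have hpoly : (k : ℝ) ^ 4 ≤ 2 * (k : ℝ) * ((k : ℝ) - 1) ^ 3 := by
      nlinarith [h5, mul_nonneg h5 h5, mul_nonneg (mul_nonneg h5 h5) h5]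
    calc g ^ 2 * (k : ℝ) ^ 4 ≤ g ^ 2 * (2 * (k : ℝ) * ((k : ℝ) - 1) ^ 3) :=
          mul_le_mul_of_nonneg_left hpoly (sq_nonneg g)
      _ = (k : ℝ) * ((k : ℝ) - 1) ^ 3 * g ^ 2 * 2 := by ring
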